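/- Let G be a transitive nilpotent permutation group on a finite set Ω, p a prime dividing |G|, and α ∈ Ω. Let G_p denote the (unique) p-Sylow subgroup of G. Then the orbit Σ = α^{G_p} is a G-block whose cardinality is the largest power of p dividing |Ω|. -/
import Mathlib


open Pointwise

namespace GaloisBlocks

variable {Ω : Type*}

/-- `G ≤ Sym(Ω)` is transitive on `Ω`. -/
def IsTransitive (G : Subgroup (Equiv.Perm Ω)) : Prop :=
  ∀ a b : Ω, ∃ g ∈ G, g a = b

/-- `Δ` is a `G`-block: every `G`-translate of `Δ` equals `Δ` or is disjoint from it. -/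
def IsBlock (G : Subgroup (Equiv.Perm Ω)) (Δ : Set Ω) : Prop :=
  ∀ g ∈ G, g • Δ = Δ ∨ Disjoint (g • Δ) Δ

/-- The setwise stabilizer `G_Δ` of `Δ` in `G`. -/
def stab (G : Subgroup (Equiv.Perm Ω)) (Δ : Set Ω) : Subgroup (Equiv.Perm Ω) :=
  G ⊓ MulAction.stabilizer (Equiv.Perm Ω) Δ

/-- The point stabilizer `G_α`. -/
def stabPt (G : Subgroup (Equiv.Perm Ω)) (α : Ω) : Subgroup (Equiv.Perm Ω) :=
  G ⊓ MulAction.stabilizer (Equiv.Perm Ω) α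

/-- The `Δ`-block system of `S`: all `G`-translates of `Δ` contained in `S`. -/
def blockSystem (G : Subgroup (Equiv.Perm Ω)) (S Δ : Set Ω) : Set (Set Ω) :=
  {Υ | (∃ g ∈ G, Υ = g • Δ) ∧ Υ ⊆ S}

/-- `G(S/Δ)`: elements of `G_S` fixing setwise every block of the `Δ`-block
system of `S`. -/
def blockKer (G : Subgroup (Equiv.Perm Ω)) (S Δ : Set Ω) : Subgroup (Equiv.Perm Ω) :=
  stab G S ⊓ ⨅ Υ ∈ blockSystem G S Δ, MulAction.stabilizer (Equiv.Perm Ω) Υ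

/-- `G^Δ = G(Ω/Δ)`: the kernel of the action of `G` on the block system of `Δ`. -/
def fullKer (G : Subgroup (Equiv.Perm Ω)) (Δ : Set Ω) : Subgroup (Equiv.Perm Ω) :=
  blockKer G Set.univ Δ

/-- The orbit `α^N`. -/
def orbitOf (N : Subgroup (Equiv.Perm Ω)) (α : Ω) : Set Ω :=
  {β | ∃ g ∈ N, g α = β}

/-- `G` is primitive: transitive with only trivial blocks. -/
def IsPrimitive (G : Subgroup (Equiv.Perm Ω)) : Prop :=
  IsTransitive G ∧ ∀ Δ : Set Ω, IsBlock G Δ → Δ.Subsingleton ∨ Δ = Set.univ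

/-- `Δ` is a maximal `G`-subblock of `S`. -/
def IsMaximalSubblock (G : Subgroup (Equiv.Perm Ω)) (Δ S : Set Ω) : Prop :=
  IsBlock G Δ ∧ IsBlock G S ∧ Δ ⊂ S ∧
    ∀ Υ : Set Ω, IsBlock G Υ → ¬(Δ ⊂ Υ ∧ Υ ⊂ S)

/-- `P` is a `p`-Sylow subgroup of `G`. -/
def IsSylowOf (p : ℕ) (P G : Subgroup (Equiv.Perm Ω)) : Prop :=
  P ≤ G ∧ IsPGroup p ↥P ∧
    ∀ Q : Subgroup (Equiv.Perm Ω), Q ≤ G → IsPGroup p ↥Q → P ≤ Q → Q = P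

/-- The orbit of `α` under the `p`-Sylow subgroup of a transitive nilpotent
group is a block whose size is the largest power of `p` dividing `#Ω`. -/
theorem stmt5 [Fintype Ω] (G P : Subgroup (Equiv.Perm Ω)) (hG : IsTransitive G)
    (hnil : Group.IsNilpotent ↥G) (p : ℕ) (hp : p.Prime)
    (hpG : p ∣ Nat.card ↥G) (hP : IsSylowOf p P G) (α : Ω) :
    IsBlock G (orbitOf P α) ∧
    (orbitOf P α).ncard = p ^ ((Fintype.card Ω).factorization p) := by
  haveI : Fact p.Prime := ⟨hp⟩
  haveI : Nonempty Ω := ⟨α⟩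
  obtain ⟨hPG, hPp, hPmax⟩ := hP
  -- `P' := P.subgroupOf G` is a Sylow `p`-subgroup of `↥G`.
  have hP'p : IsPGroup p ↥(P.subgroupOf G) :=
    hPp.of_equiv (Subgroup.subgroupOfEquivOfLe hPG).symm
  have hmapP' : (P.subgroupOf G).map G.subtype = P := by
    rw [Subgroup.subgroupOf_map_subtype, inf_eq_left.mpr hPG]
  have hmax' : ∀ Q : Subgroup ↥G, IsPGroup p ↥Q → P.subgroupOf G ≤ Q →
      Q = P.subgroupOf G := by
    intro Q hQ hle
    have h1 : Q.map G.subtype = P := by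
      refine hPmax _ (Subgroup.map_subtype_le Q)
        (hQ.of_equiv (Q.equivMapOfInjective G.subtype G.subtype_injective)) ?_
      rw [← hmapP']; exact Subgroup.map_mono hle
    calc Q = (Q.map G.subtype).comap G.subtype :=
            (Subgroup.comap_map_eq_self_of_injective G.subtype_injective Q).symm
      _ = P.subgroupOf G := by rw [h1]; rfl
  let S : Sylow p ↥G := ⟨P.subgroupOf G, hP'p, fun hQ hle => hmax' _ hQ hle⟩
  have hSnorm : (P.subgroupOf G).Normal := by
    have h04 : Group.IsNilpotent ↥G ↔
        ∀ (q : ℕ) (_hq : Fact q.Prime) (Q : Sylow q ↥G), (↑Q : Subgroup ↥G).Normal :=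
      (isNilpotent_of_finite_tfae (G := ↥G)).out 0 3
    exact h04.mp hnil p ⟨hp⟩ S
  haveI := Sylow.unique_of_normal S hSnorm
  -- conjugation stability of P under G
  have hconj : ∀ g ∈ G, ∀ h ∈ P, g * h * g⁻¹ ∈ P := by
    intro g hg h hh
    have : ((⟨g, hg⟩ : ↥G) * ⟨h, hPG hh⟩ * (⟨g, hg⟩ : ↥G)⁻¹) ∈ P.subgroupOf G :=
      hSnorm.conj_mem ⟨h, hPG hh⟩ hh ⟨g, hg⟩
    exact this
  -- translates of orbits are orbits
  have horb : ∀ g ∈ G, ∀ β : Ω, g • orbitOf P β = orbitOf P (g β) := by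
    intro g hg β
    ext x
    simp only [Set.mem_smul_set, orbitOf, Set.mem_setOf_eq]
    constructor
    · rintro ⟨y, ⟨h, hh, rfl⟩, rfl⟩
      refine ⟨g * h * g⁻¹, hconj g hg h hh, ?_⟩
      simp [Equiv.Perm.smul_def, Equiv.Perm.mul_apply]
    · rintro ⟨h, hh, rfl⟩
      refine ⟨(g⁻¹ * h * g) β, ⟨g⁻¹ * h * g, ?_, rfl⟩, ?_⟩
      · simpa [mul_assoc] using hconj g⁻¹ (inv_mem hg) h hh
      · simp [Equiv.Perm.smul_def, Equiv.Perm.mul_apply]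
  have horbit_eq : ∀ (β x : Ω), x ∈ orbitOf P β → orbitOf P x = orbitOf P β := by
    rintro β x ⟨h, hh, rfl⟩
    ext y
    constructor
    · rintro ⟨k, hk, rfl⟩
      exact ⟨k * h, mul_mem hk hh, by simp [Equiv.Perm.mul_apply]⟩
    · rintro ⟨k, hk, rfl⟩
      exact ⟨k * h⁻¹, mul_mem hk (inv_mem hh), by simp [Equiv.Perm.mul_apply]⟩
  constructor
  · -- the block property
    intro g hg
    rw [horb g hg α]
    by_cases hx : Disjoint (orbitOf P (g α)) (orbitOf P α)
    · exact Or.inr hx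
    · left
      rw [Set.not_disjoint_iff] at hx
      obtain ⟨x, hx1, hx2⟩ := hx
      rw [← horbit_eq _ x hx1, horbit_eq _ x hx2]
  · -- the cardinality
    have horb2 : orbitOf P α = MulAction.orbit ↥(P.subgroupOf G) α := by
      ext x
      constructor
      · rintro ⟨g, hg, rfl⟩
        exact ⟨⟨⟨g, hPG hg⟩, hg⟩, rfl⟩
      · rintro ⟨⟨⟨g, hgG⟩, hg⟩, rfl⟩
        exact ⟨g, hg, rfl⟩
    have key1 : Nat.card (MulAction.orbit ↥(P.subgroupOf G) α) *
        Nat.card (MulAction.stabilizer ↥(P.subgroupOf G) α) =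
        Nat.card ↥(P.subgroupOf G) := by
      have := Nat.card_congr
        (MulAction.orbitProdStabilizerEquivGroup ↥(P.subgroupOf G) α)
      simpa [Nat.card_prod] using this
    have key2 : Fintype.card Ω * Nat.card (MulAction.stabilizer ↥G α) =
        Nat.card ↥G := by
      have h1 : MulAction.orbit ↥G α = Set.univ := by
        ext b
        simp only [Set.mem_univ, iff_true]
        obtain ⟨g, hg, hgb⟩ := hG α b
        exact ⟨⟨g, hg⟩, hgb⟩
      have h2 := Nat.card_congr (MulAction.orbitProdStabilizerEquivGroup ↥G α)
      rw [Nat.card_prod, h1] at h2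
      rwa [Nat.card_congr (Equiv.Set.univ Ω), Nat.card_eq_fintype_card] at h2
    set H : Subgroup ↥G := MulAction.stabilizer ↥G α with hH
    set T : Subgroup ↥G := H ⊓ P.subgroupOf G with hT
    -- the stabilizer of α in P' corresponds to T
    have hstab : MulAction.stabilizer ↥(P.subgroupOf G) α = T.subgroupOf (P.subgroupOf G) := by
      ext h
      simp only [MulAction.mem_stabilizer_iff, Subgroup.mem_subgroupOf, hT,
        Subgroup.mem_inf, hH]
      rw [Subgroup.smul_def]
      exact ⟨fun hx => ⟨hx, h.2⟩, fun hx => hx.1⟩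
    have hcardstab : Nat.card (MulAction.stabilizer ↥(P.subgroupOf G) α) = Nat.card ↥T := by
      rw [hstab]
      exact Nat.card_congr (Subgroup.subgroupOfEquivOfLe inf_le_right).toEquiv
    -- T.subgroupOf H is a Sylow p-subgroup of ↥H
    have hTp : IsPGroup p ↥(T.subgroupOf H) :=
      (hP'p.to_le inf_le_right).of_equiv (Subgroup.subgroupOfEquivOfLe inf_le_left).symm
    have hmaxH : ∀ Q : Subgroup ↥H, IsPGroup p ↥Q → T.subgroupOf H ≤ Q →
        Q = T.subgroupOf H := by
      intro Q hQ hle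
      have hQ0 : IsPGroup p ↥(Q.map H.subtype) :=
        hQ.of_equiv (Q.equivMapOfInjective H.subtype H.subtype_injective)
      obtain ⟨R, hR⟩ := hQ0.exists_le_sylow
      have hRS : R = S := Subsingleton.elim R S
      rw [hRS] at hR
      have hle2 : Q ≤ T.subgroupOf H :=
        Subgroup.map_le_iff_le_comap.mp (le_inf (Subgroup.map_subtype_le Q) hR)
      exact le_antisymm hle2 hle
    let SH : Sylow p ↥H := ⟨T.subgroupOf H, hTp, fun hQ hle => hmaxH _ hQ hle⟩
    have hcardT : Nat.card ↥T = p ^ (Nat.card ↥H).factorization p := by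
      have := Sylow.card_eq_multiplicity SH
      rwa [Nat.card_congr (Subgroup.subgroupOfEquivOfLe (inf_le_left : T ≤ H)).toEquiv] at this
    have hcardP' : Nat.card ↥(P.subgroupOf G) = p ^ (Nat.card ↥G).factorization p :=
      Sylow.card_eq_multiplicity S
    -- factorization arithmetic
    have hΩ0 : Fintype.card Ω ≠ 0 := Fintype.card_ne_zero
    have hH0 : Nat.card ↥H ≠ 0 := Nat.card_pos.ne'
    have hfact : (Nat.card ↥G).factorization p =
        (Fintype.card Ω).factorization p + (Nat.card ↥H).factorization p := by
      rw [← key2, Nat.factorization_mul hΩ0 hH0]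
      rfl
    rw [← Nat.card_coe_set_eq, horb2]
    rw [hcardstab, hcardT, hcardP', hfact, pow_add] at key1
    exact Nat.eq_of_mul_eq_mul_right (pow_pos hp.pos _) key1

end GaloisBlocks
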